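/- For every ℓ > 0, every a ∈ (0,∞), and every b ∈ ℝ, the sign of Γ(a,b,ℓ) − 2𝒢(a,b,ℓ) equals the sign of a − b; that is, Γ(a,b,ℓ) > 2𝒢(a,b,ℓ) iff a > b, Γ(a,b,ℓ) = 2𝒢(a,b,ℓ) iff a = b, and Γ(a,b,ℓ) < 2𝒢(a,b,ℓ) iff a < b. -/

import Mathlib

open Real

noncomputable def Phi (x : ℝ) : ℝ :=
  (Real.sqrt (2 * Real.pi))⁻¹ * ∫ y in Set.Iic x, Real.exp (-y ^ 2 / 2)

open MeasureTheory

lemma gauss_int (c : ℝ) : Integrable (fun t : ℝ => Real.exp (-(t + c) ^ 2 / 2)) := by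
  have h : Integrable (fun t : ℝ => Real.exp (-(1/2 : ℝ) * t ^ 2)) :=
    integrable_exp_neg_mul_sq (by norm_num)
  have h2 : Integrable (fun t : ℝ => Real.exp (-(1/2 : ℝ) * (t + c) ^ 2)) :=
    h.comp_add_right c
  convert h2 using 2 with t
  ring_nf

noncomputable def F (x : ℝ) : ℝ := Real.exp (x ^ 2 / 2) * Phi x

lemma F_strictMono : StrictMono F := by
  intro y x hyx
  set c : ℝ := x - y with hc
  have hc0 : 0 < c := sub_pos.mpr hyx
  have hxyc : x = y + c := by rw [hc]; ring
  -- translation identity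
  have shift : (∫ t in Set.Iic x, Real.exp (-t ^ 2 / 2)) =
      ∫ t in Set.Iic y, Real.exp (-(t + c) ^ 2 / 2) := by
    rw [← integral_indicator measurableSet_Iic, ← integral_indicator measurableSet_Iic]
    rw [← integral_add_right_eq_self
      (fun t => (Set.Iic x).indicator (fun t => Real.exp (-t ^ 2 / 2)) t) c]
    congr 1 with t
    by_cases ht : t ≤ y
    · have : t + c ≤ x := by rw [hxyc]; linarith
      simp [Set.indicator, ht, this]
    · have : ¬ t + c ≤ x := by rw [hxyc]; intro h; exact ht (by linarith)
      simp [Set.indicator, ht, this]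
  -- two integrands on Iic y
  have int1 : IntegrableOn (fun t : ℝ => Real.exp ((x ^ 2 - (t + c) ^ 2) / 2)) (Set.Iic y) := by
    have : (fun t : ℝ => Real.exp ((x ^ 2 - (t + c) ^ 2) / 2)) =
        fun t => Real.exp (x ^ 2 / 2) * Real.exp (-(t + c) ^ 2 / 2) := by
      funext t; rw [← Real.exp_add]; ring_nf
    rw [this]
    exact ((gauss_int c).const_mul _).integrableOn
  have int2 : IntegrableOn (fun t : ℝ => Real.exp ((y ^ 2 - t ^ 2) / 2)) (Set.Iic y) := by
    have : (fun t : ℝ => Real.exp ((y ^ 2 - t ^ 2) / 2)) =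
        fun t => Real.exp (y ^ 2 / 2) * Real.exp (-(t + 0) ^ 2 / 2) := by
      funext t; rw [← Real.exp_add]; ring_nf
    rw [this]
    exact ((gauss_int 0).const_mul _).integrableOn
  -- strict inequality of the set integrals
  have key : (∫ t in Set.Iic y, Real.exp ((y ^ 2 - t ^ 2) / 2)) <
      ∫ t in Set.Iic y, Real.exp ((x ^ 2 - (t + c) ^ 2) / 2) := by
    rw [← sub_pos, ← integral_sub int1 int2]
    set h : ℝ → ℝ := fun t =>
      Real.exp ((x ^ 2 - (t + c) ^ 2) / 2) - Real.exp ((y ^ 2 - t ^ 2) / 2) with hh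
    have hexp : ∀ t, t ≤ y → (y ^ 2 - t ^ 2) / 2 ≤ (x ^ 2 - (t + c) ^ 2) / 2 := by
      intro t ht
      have : (x ^ 2 - (t + c) ^ 2) / 2 - (y ^ 2 - t ^ 2) / 2 = c * (y - t) := by
        rw [hxyc]; ring
      nlinarith
    have hnn : 0 ≤ᵐ[volume.restrict (Set.Iic y)] h := by
      filter_upwards [ae_restrict_mem measurableSet_Iic] with t ht
      exact sub_nonneg.mpr (Real.exp_le_exp.mpr (hexp t ht))
    rw [setIntegral_pos_iff_support_of_nonneg_ae hnn (int1.sub int2)]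
    have hsub : Set.Iio y ⊆ Function.support h ∩ Set.Iic y := by
      intro t ht
      refine ⟨?_, Set.mem_Iic.mpr (le_of_lt ht)⟩
      have hlt : (y ^ 2 - t ^ 2) / 2 < (x ^ 2 - (t + c) ^ 2) / 2 := by
        have : (x ^ 2 - (t + c) ^ 2) / 2 - (y ^ 2 - t ^ 2) / 2 = c * (y - t) := by
          rw [hxyc]; ring
        nlinarith [Set.mem_Iio.mp ht]
      have : 0 < h t := sub_pos.mpr (Real.exp_lt_exp.mpr hlt)
      exact ne_of_gt this
    calc (0 : ENNReal) < volume (Set.Iio y) := by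
          rw [Real.volume_Iio]; exact ENNReal.zero_lt_top
      _ ≤ volume (Function.support h ∩ Set.Iic y) := measure_mono hsub
  -- assemble
  have e1 : Real.exp (y ^ 2 / 2) * ∫ t in Set.Iic y, Real.exp (-t ^ 2 / 2) =
      ∫ t in Set.Iic y, Real.exp ((y ^ 2 - t ^ 2) / 2) := by
    rw [← integral_const_mul]
    congr 1 with t
    rw [← Real.exp_add]; ring_nf
  have e2 : Real.exp (x ^ 2 / 2) * ∫ t in Set.Iic x, Real.exp (-t ^ 2 / 2) =
      ∫ t in Set.Iic y, Real.exp ((x ^ 2 - (t + c) ^ 2) / 2) := by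
    rw [shift, ← integral_const_mul]
    congr 1 with t
    rw [← Real.exp_add]; ring_nf
  have hmain : Real.exp (y ^ 2 / 2) * (∫ t in Set.Iic y, Real.exp (-t ^ 2 / 2)) <
      Real.exp (x ^ 2 / 2) * ∫ t in Set.Iic x, Real.exp (-t ^ 2 / 2) := by
    rw [e1, e2]; exact key
  have hpos : (0 : ℝ) < (Real.sqrt (2 * Real.pi))⁻¹ := by
    rw [inv_pos]
    exact Real.sqrt_pos.mpr (by positivity)
  unfold F Phi
  calc Real.exp (y ^ 2 / 2) * ((Real.sqrt (2 * Real.pi))⁻¹ * ∫ t in Set.Iic y, Real.exp (-t ^ 2 / 2))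
      = (Real.sqrt (2 * Real.pi))⁻¹ * (Real.exp (y ^ 2 / 2) * ∫ t in Set.Iic y, Real.exp (-t ^ 2 / 2)) := by ring
    _ < (Real.sqrt (2 * Real.pi))⁻¹ * (Real.exp (x ^ 2 / 2) * ∫ t in Set.Iic x, Real.exp (-t ^ 2 / 2)) :=
        by exact mul_lt_mul_of_pos_left hmain hpos
    _ = Real.exp (x ^ 2 / 2) * ((Real.sqrt (2 * Real.pi))⁻¹ * ∫ t in Set.Iic x, Real.exp (-t ^ 2 / 2)) := by ring

/-- `Γ(a,b,ℓ)` for `a > 0`. -/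
noncomputable def Gam (a b ℓ : ℝ) : ℝ :=
  ℓ ^ 2 * Phi (-(ℓ * b) / (2 * Real.sqrt a)) +
    ℓ ^ 2 * Real.exp (ℓ ^ 2 * (a - b) / 2) * Phi (ℓ * (b / (2 * Real.sqrt a) - Real.sqrt a))

/-- `𝒢(a,b,ℓ)` for `a > 0`. -/
noncomputable def calG (a b ℓ : ℝ) : ℝ :=
  ℓ ^ 2 * Real.exp (ℓ ^ 2 * (a - b) / 2) * Phi (ℓ * (b / (2 * Real.sqrt a) - Real.sqrt a))

/-- The sign of `Γ(a,b,ℓ) − 2𝒢(a,b,ℓ)` equals the sign of `a − b`. -/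
theorem sign_Gamma_sub_two_calG (ℓ a b : ℝ) (hℓ : 0 < ℓ) (ha : 0 < a) :
    (2 * calG a b ℓ < Gam a b ℓ ↔ b < a) ∧
    (Gam a b ℓ = 2 * calG a b ℓ ↔ a = b) ∧
    (Gam a b ℓ < 2 * calG a b ℓ ↔ a < b) := by
  set s : ℝ := Real.sqrt a with hs
  have hs0 : 0 < s := Real.sqrt_pos.mpr ha
  have hsa : s ^ 2 = a := Real.sq_sqrt ha.le
  set X : ℝ := -(ℓ * b) / (2 * s) with hX
  set Y : ℝ := ℓ * (b / (2 * s) - s) with hY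
  have hE : ℓ ^ 2 * (a - b) / 2 = Y ^ 2 / 2 - X ^ 2 / 2 := by
    rw [hY, hX, ← hsa]
    field_simp
    ring
  set K : ℝ := ℓ ^ 2 * Real.exp (-(X ^ 2) / 2) with hKdef
  have hK : 0 < K := by positivity
  have hdiff : Gam a b ℓ - 2 * calG a b ℓ = K * (F X - F Y) := by
    unfold Gam calG F
    rw [← hs, ← hX, ← hY, hE]
    have hEE : Real.exp (Y ^ 2 / 2 - X ^ 2 / 2) =
        Real.exp (-(X ^ 2) / 2) * Real.exp (Y ^ 2 / 2) := by
      rw [← Real.exp_add]; ring_nf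
    have h1 : Real.exp (-(X ^ 2) / 2) * Real.exp (X ^ 2 / 2) = 1 := by
      rw [← Real.exp_add]; norm_num; ring
    rw [hEE, hKdef]
    linear_combination (-(ℓ ^ 2 * Phi X)) * h1
  have hXY : X - Y = ℓ * (a - b) / s := by
    rw [hX, hY, ← hsa]; field_simp; ring
  have hlt : Y < X ↔ b < a := by
    rw [← sub_pos, hXY, ← sub_pos (a := a)]
    constructor
    · intro h
      by_contra hcon
      push_neg at hcon
      have h1 : ℓ * (a - b) ≤ 0 := mul_nonpos_of_nonneg_of_nonpos hℓ.le (by linarith)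
      have : ℓ * (a - b) / s ≤ 0 := div_nonpos_of_nonpos_of_nonneg h1 hs0.le
      linarith
    · intro h
      have h1 : 0 < ℓ * (a - b) := mul_pos hℓ h
      exact div_pos h1 hs0
  have heq : X = Y ↔ a = b := by
    constructor
    · intro h
      have : ℓ * (a - b) / s = 0 := by rw [← hXY, h, sub_self]
      have h2 : ℓ * (a - b) = 0 := by
        field_simp at this; linarith
      rcases mul_eq_zero.mp h2 with h3 | h3
      · exact absurd h3 (ne_of_gt hℓ)
      · linarith
    · intro h
      have : X - Y = 0 := by rw [hXY, h, sub_self]; ring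
      linarith
  have hlt' : X < Y ↔ a < b := by
    constructor
    · intro h
      rcases lt_trichotomy a b with h1 | h1 | h1
      · exact h1
      · exact absurd (heq.mpr h1) (ne_of_lt h)
      · exact absurd (hlt.mpr h1) (not_lt.mpr h.le)
    · intro h
      rcases lt_trichotomy X Y with h1 | h1 | h1
      · exact h1
      · exact absurd (heq.mp h1) (ne_of_lt h)
      · exact absurd (hlt.mp h1) (not_lt.mpr h.le)
  refine ⟨?_, ?_, ?_⟩
  · rw [← sub_pos, hdiff, ← hlt]
    constructor
    · intro h
      have h2 : 0 < F X - F Y := by nlinarith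
      exact F_strictMono.lt_iff_lt.mp (by linarith)
    · intro h
      exact mul_pos hK (sub_pos.mpr (F_strictMono h))
  · rw [← sub_eq_zero, hdiff, ← heq]
    constructor
    · intro h
      rcases mul_eq_zero.mp h with h1 | h1
      · exact absurd h1 (ne_of_gt hK)
      · exact F_strictMono.injective (by linarith)
    · intro h; rw [h, sub_self, mul_zero]
  · rw [← sub_neg, hdiff, ← hlt']
    constructor
    · intro h
      have h2 : F X - F Y < 0 := by nlinarith
      exact F_strictMono.lt_iff_lt.mp (by linarith)
    · intro h
      exact mul_neg_of_pos_of_neg hK (sub_neg.mpr (F_strictMono h))
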